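/- Let α > 0 and let (a,b) ⊆ ℝ be an open interval. If F and G are both indefinite MC^α integrals of the same function f on (a,b), then F − G is constant on (a,b). -/

import Mathlib

open Filter Set Topology MeasureTheory

/-- `φ` is an `α`-control function for the pair `(F, f)` on the interval `I`:
`φ` is strictly increasing on `I` and for every `x ∈ I`,
`(F y - F x - f x (y - x)) / (φ (x + α (y - x)) - φ x) → 0` as `y → x` within `I \ {x}`. -/
def IsControlFn (α : ℝ) (I : Set ℝ) (F f φ : ℝ → ℝ) : Prop :=
  StrictMonoOn φ I ∧ ∀ x ∈ I,
    Tendsto (fun y => (F y - F x - f x * (y - x)) / (φ (x + α * (y - x)) - φ x))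
      (𝓝[I \ {x}] x) (𝓝 0)

/-- `F` is an indefinite `MC^α` integral of `f` on `I`. -/
def IsMCIntegral (α : ℝ) (I : Set ℝ) (F f : ℝ → ℝ) : Prop :=
  ∃ φ : ℝ → ℝ, IsControlFn α I F f φ

lemma lemA (β θ : ℝ) (ψ : ℝ → ℝ) (hβ : 1 ≤ β) (hθ : 0 < θ)
    (hψ : ∀ s, 0 < s → s ≤ θ → 0 ≤ ψ s) :
    ∃ k, 0 < k ∧ β * k ≤ θ ∧ ψ (β * k) ≤ 2 * β * ψ k + k := by
  by_contra hcon
  push_neg at hcon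
  have hβ0 : (0:ℝ) < β := lt_of_lt_of_le one_pos hβ
  set g : ℕ → ℝ := fun n => ψ (θ / β ^ n) with hg
  have hpow : ∀ n : ℕ, (1:ℝ) ≤ β ^ n := fun n => one_le_pow₀ hβ
  have hmem : ∀ n : ℕ, 0 < θ / β ^ n ∧ θ / β ^ n ≤ θ := by
    intro n
    constructor
    · positivity
    · exact div_le_self hθ.le (hpow n)
  have hgnn : ∀ n, 0 ≤ g n := fun n => hψ _ (hmem n).1 (hmem n).2
  have hstep : ∀ n : ℕ, 2 * β * g (n+1) + θ / β ^ (n+1) < g n := by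
    intro n
    have hk : 0 < θ / β ^ (n+1) := (hmem (n+1)).1
    have h1 : β * (θ / β ^ (n+1)) = θ / β ^ n := by
      field_simp
      ring
    have h2 : β * (θ / β ^ (n+1)) ≤ θ := by rw [h1]; exact (hmem n).2
    have := hcon (θ / β ^ (n+1)) hk h2
    rw [h1] at this
    exact this
  -- g n > θ / β^(n+1)
  have hlb : ∀ n, θ / β ^ (n+1) ≤ g n := by
    intro n
    have := hstep n
    nlinarith [hgnn (n+1)]
  -- (2β)^n * g n ≤ g 0
  have hchain : ∀ n, (2*β) ^ n * g n ≤ g 0 := by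
    intro n
    induction n with
    | zero => simp
    | succ n ih =>
      have h1 := hstep n
      have h2 : (0:ℝ) < (2*β) ^ n := by positivity
      have : (2*β) ^ (n+1) * g (n+1) ≤ (2*β) ^ n * g n := by
        rw [pow_succ]
        have hk : 0 < θ / β ^ (n+1) := by positivity
        nlinarith
      linarith
  -- combine: g 0 ≥ (2β)^n * θ/β^(n+1) = 2^n θ / β
  have hfinal : ∀ n, 2 ^ n * (θ / β) ≤ g 0 := by
    intro n
    have h1 : (2*β) ^ n * (θ / β ^ (n+1)) ≤ (2*β)^n * g n := by
      have : (0:ℝ) < (2*β)^n := by positivity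
      exact mul_le_mul_of_nonneg_left (hlb n) this.le
    have h2 : (2*β) ^ n * (θ / β ^ (n+1)) = 2 ^ n * (θ / β) := by
      rw [mul_pow, pow_succ]
      field_simp
    rw [h2] at h1
    linarith [hchain n]
  obtain ⟨n, hn⟩ := pow_unbounded_of_one_lt (g 0 / (θ / β)) (by norm_num : (1:ℝ) < 2)
  have hθβ : 0 < θ / β := by positivity
  have := hfinal n
  rw [div_lt_iff₀ hθβ] at hn
  linarith

lemma lemP {α β a b : ℝ} {F f φ : ℝ → ℝ} (hα : 0 < α) (hαβ : α ≤ β)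
    (hc : IsControlFn α (Set.Ioo a b) F f φ) {x : ℝ} (hx : x ∈ Set.Ioo a b)
    {ε : ℝ} (hε : 0 < ε) :
    ∃ δ > 0, ∀ y ∈ Set.Ioo a b, y ≠ x → |y - x| < δ → x + β * (y - x) ∈ Set.Ioo a b →
      |F y - F x - f x * (y - x)| ≤ ε * |φ (x + β * (y - x)) - φ x| := by
  obtain ⟨hmono, hlim⟩ := hc
  have hlim' := hlim x hx
  rw [Metric.tendsto_nhdsWithin_nhds] at hlim'
  obtain ⟨δ, hδ, hδ'⟩ := hlim' ε hε
  refine ⟨δ, hδ, ?_⟩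
  intro y hy hyx hyd hzβ
  set zα := x + α * (y - x) with hzαdef
  set zβ := x + β * (y - x) with hzβdef
  have hq := hδ' (x := y) ⟨hy, hyx⟩ (by rwa [Real.dist_eq])
  rw [Real.dist_eq, sub_zero] at hq
  -- zα lies between x and zβ, hence in the interval
  have hzα : zα ∈ Set.Ioo a b := by
    rcases lt_or_gt_of_ne hyx with h | h
    · -- y < x : zβ ≤ zα < x
      have h1 : zα < x := by
        have : α * (y - x) < 0 := mul_neg_of_pos_of_neg hα (by linarith)
        simp only [hzαdef]; linarith
      have h2 : zβ ≤ zα := by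
        have : β * (y - x) ≤ α * (y - x) := by nlinarith
        simp only [hzαdef, hzβdef]; linarith
      exact ⟨lt_of_lt_of_le hzβ.1 h2, lt_trans h1 hx.2⟩
    · -- x < y : x < zα ≤ zβ
      have h1 : x < zα := by
        have : 0 < α * (y - x) := mul_pos hα (by linarith)
        simp only [hzαdef]; linarith
      have h2 : zα ≤ zβ := by
        have : α * (y - x) ≤ β * (y - x) := by nlinarith
        simp only [hzαdef, hzβdef]; linarith
      exact ⟨lt_trans hx.1 h1, lt_of_le_of_lt h2 hzβ.2⟩
  -- denominator comparison
  have hden : |φ zα - φ x| ≤ |φ zβ - φ x| ∧ φ zα - φ x ≠ 0 := by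
    rcases lt_or_gt_of_ne hyx with h | h
    · have h1 : zα < x := by
        have : α * (y - x) < 0 := mul_neg_of_pos_of_neg hα (by linarith)
        simp only [hzαdef]; linarith
      have h2 : zβ ≤ zα := by
        have : β * (y - x) ≤ α * (y - x) := by nlinarith
        simp only [hzαdef, hzβdef]; linarith
      have hφ1 : φ zα < φ x := hmono hzα hx h1
      have hφ2 : φ zβ ≤ φ zα := hmono.monotoneOn hzβ hzα h2
      rw [abs_of_nonpos (by linarith), abs_of_nonpos (by linarith)]
      exact ⟨by linarith, by intro hc0; linarith [sub_eq_zero.mp hc0]⟩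
    · have h1 : x < zα := by
        have : 0 < α * (y - x) := mul_pos hα (by linarith)
        simp only [hzαdef]; linarith
      have h2 : zα ≤ zβ := by
        have : α * (y - x) ≤ β * (y - x) := by nlinarith
        simp only [hzαdef, hzβdef]; linarith
      have hφ1 : φ x < φ zα := hmono hx hzα h1
      have hφ2 : φ zα ≤ φ zβ := hmono.monotoneOn hzα hzβ h2
      rw [abs_of_nonneg (by linarith), abs_of_nonneg (by linarith)]
      exact ⟨by linarith, by intro hc0; linarith [sub_eq_zero.mp hc0]⟩
  have hdpos : 0 < |φ zα - φ x| := abs_pos.mpr hden.2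
  rw [abs_div] at hq
  rw [div_lt_iff₀ hdpos] at hq
  calc |F y - F x - f x * (y - x)| ≤ ε * |φ zα - φ x| := hq.le
    _ ≤ ε * |φ zβ - φ x| := mul_le_mul_of_nonneg_left hden.1 hε.le

lemma lemCont {α β a b : ℝ} {F G f φ₁ φ₂ : ℝ → ℝ} (hα : 0 < α) (hαβ : α ≤ β) (hβ1 : 1 ≤ β)
    (h1 : IsControlFn α (Set.Ioo a b) F f φ₁) (h2 : IsControlFn α (Set.Ioo a b) G f φ₂)
    {x : ℝ} (hx : x ∈ Set.Ioo a b) :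
    ContinuousWithinAt (fun t => F t - G t) (Set.Ioo a b) x := by
  rw [Metric.continuousWithinAt_iff]
  intro ε' hε'
  have hβ0 : (0:ℝ) < β := lt_of_lt_of_le one_pos hβ1
  set r := min ((x - a) / (2 * β)) ((b - x) / (2 * β)) with hrdef
  have hr : 0 < r := by
    apply lt_min <;> [skip; skip] <;>
    · apply div_pos
      · linarith [hx.1, hx.2]
      · linarith
  have hlo : a < x - β * r := by
    have : β * r ≤ β * ((x - a) / (2 * β)) :=
      mul_le_mul_of_nonneg_left (min_le_left _ _) hβ0.le
    have h2' : β * ((x - a) / (2 * β)) = (x - a) / 2 := by field_simp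
    have hxa : 0 < x - a := by linarith [hx.1]
    rw [h2'] at this
    linarith
  have hhi : x + β * r < b := by
    have : β * r ≤ β * ((b - x) / (2 * β)) :=
      mul_le_mul_of_nonneg_left (min_le_right _ _) hβ0.le
    have h2' : β * ((b - x) / (2 * β)) = (b - x) / 2 := by field_simp
    have hxb : 0 < b - x := by linarith [hx.2]
    rw [h2'] at this
    linarith
  have hβr : 0 < β * r := mul_pos hβ0 hr
  have hloI : x - β * r ∈ Set.Ioo a b := ⟨hlo, by linarith [hx.2]⟩
  have hhiI : x + β * r ∈ Set.Ioo a b := ⟨by linarith [hx.1], hhi⟩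
  set M := (φ₁ (x + β * r) - φ₁ (x - β * r)) + (φ₂ (x + β * r) - φ₂ (x - β * r)) with hMdef
  have hM : 0 ≤ M := by
    have := h1.1.monotoneOn hloI hhiI (by linarith)
    have := h2.1.monotoneOn hloI hhiI (by linarith)
    simp only [hMdef]; linarith
  set ε := ε' / (2 * (M + 1)) with hεdef
  have hε : 0 < ε := by positivity
  obtain ⟨δ₁, hδ₁, hP₁⟩ := lemP hα hαβ h1 hx hε
  obtain ⟨δ₂, hδ₂, hP₂⟩ := lemP hα hαβ h2 hx hε
  refine ⟨min (min δ₁ δ₂) r, by positivity, ?_⟩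
  intro y hy hyd
  rw [Real.dist_eq] at hyd
  rcases eq_or_ne y x with rfl | hyx
  · simpa using hε'
  · set z := x + β * (y - x) with hzdef
    have hyr : |y - x| < r := lt_of_lt_of_le hyd (min_le_right _ _)
    have hz1 : x - β * r < z := by
      have : -(β * r) < β * (y - x) := by
        have h' : -r < y - x := by cases abs_lt.mp hyr; linarith
        nlinarith
      simp only [hzdef]; linarith
    have hz2 : z < x + β * r := by
      have : β * (y - x) < β * r := by
        have h' : y - x < r := lt_of_abs_lt hyr
        nlinarith
      simp only [hzdef]; linarith
    have hzI : z ∈ Set.Ioo a b := ⟨lt_trans hlo hz1, lt_trans hz2 hhi⟩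
    have hb₁ := hP₁ y hy hyx (lt_of_lt_of_le hyd (le_trans (min_le_left _ _) (min_le_left _ _))) hzI
    have hb₂ := hP₂ y hy hyx (lt_of_lt_of_le hyd (le_trans (min_le_left _ _) (min_le_right _ _))) hzI
    -- bound |φᵢ z - φᵢ x|
    have habs : ∀ φ : ℝ → ℝ, StrictMonoOn φ (Set.Ioo a b) →
        |φ z - φ x| ≤ φ (x + β * r) - φ (x - β * r) := by
      intro φ hmono
      have h1' : φ (x - β * r) ≤ φ z := hmono.monotoneOn hloI hzI hz1.le
      have h2' : φ z ≤ φ (x + β * r) := hmono.monotoneOn hzI hhiI hz2.le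
      have h3' : φ (x - β * r) ≤ φ x := hmono.monotoneOn hloI hx (by linarith)
      have h4' : φ x ≤ φ (x + β * r) := hmono.monotoneOn hx hhiI (by linarith)
      rw [abs_le]; constructor <;> linarith
    have ha₁ := habs φ₁ h1.1
    have ha₂ := habs φ₂ h2.1
    rw [Real.dist_eq]
    have key : |(F y - G y) - (F x - G x)| ≤
        |F y - F x - f x * (y - x)| + |G y - G x - f x * (y - x)| := by
      have : (F y - G y) - (F x - G x) =
          (F y - F x - f x * (y - x)) - (G y - G x - f x * (y - x)) := by ring
      rw [this]
      exact abs_sub _ _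
    have hM1 : ε * |φ₁ z - φ₁ x| + ε * |φ₂ z - φ₂ x| ≤ ε * M := by
      simp only [hMdef]
      nlinarith
    have : |(F y - G y) - (F x - G x)| ≤ ε * M := by
      calc |(F y - G y) - (F x - G x)| ≤ _ := key
        _ ≤ ε * |φ₁ z - φ₁ x| + ε * |φ₂ z - φ₂ x| := by linarith
        _ ≤ ε * M := hM1
    have hlt : ε * M < ε' := by
      rw [hεdef]
      rw [div_mul_eq_mul_div, div_lt_iff₀ (by positivity)]
      nlinarith
    exact lt_of_le_of_lt this hlt

lemma lemMain {α a b : ℝ} (hα : 0 < α) {F G f φ₁ φ₂ : ℝ → ℝ}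
    (h1 : IsControlFn α (Set.Ioo a b) F f φ₁) (h2 : IsControlFn α (Set.Ioo a b) G f φ₂) :
    ∀ u ∈ Set.Ioo a b, ∀ v ∈ Set.Ioo a b, u < v → F v - G v ≤ F u - G u := by
  set β := max α 1 with hβdef
  have hαβ : α ≤ β := le_max_left _ _
  have hβ1 : (1:ℝ) ≤ β := le_max_right _ _
  have hβ0 : (0:ℝ) < β := lt_of_lt_of_le one_pos hβ1
  intro u hu v hv huv
  set H : ℝ → ℝ := fun t => F t - G t with hHdef
  set Φ : ℝ → ℝ := fun t => φ₁ t + φ₂ t with hΦdef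
  have hΦmono : MonotoneOn Φ (Set.Ioo a b) := by
    intro s hs t ht hst
    have := h1.1.monotoneOn hs ht hst
    have := h2.1.monotoneOn hs ht hst
    simp only [hΦdef]; linarith
  have key : ∀ ε > 0, H v - H u ≤ ε * (2 * β * (Φ v - Φ u) + 2 * (v - u)) := by
    intro ε hε
    set S : Set ℝ := {t | t ∈ Set.Icc u v ∧ H v - H t ≤ ε * (2 * β * (Φ v - Φ t) + 2 * (v - t))}
      with hSdef
    have hvS : v ∈ S := by
      refine ⟨⟨huv.le, le_refl v⟩, ?_⟩
      simp
    have hSne : S.Nonempty := ⟨v, hvS⟩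
    have hSbdd : BddBelow S := ⟨u, fun t ht => ht.1.1⟩
    have hSsub : S ⊆ Set.Ioo a b := fun t ht =>
      ⟨lt_of_lt_of_le hu.1 ht.1.1, lt_of_le_of_lt ht.1.2 hv.2⟩
    set m := sInf S with hmdef
    have hum : u ≤ m := le_csInf hSne (fun t ht => ht.1.1)
    have hmv : m ≤ v := csInf_le hSbdd hvS
    have hmI : m ∈ Set.Ioo a b := ⟨lt_of_lt_of_le hu.1 hum, lt_of_le_of_lt hmv hv.2⟩
    have hmcl : m ∈ closure S := csInf_mem_closure hSne hSbdd
    haveI : (𝓝[S] m).NeBot := mem_closure_iff_nhdsWithin_neBot.mp hmcl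
    have hcont : Tendsto H (𝓝[S] m) (𝓝 (H m)) :=
      (lemCont hα hαβ hβ1 h1 h2 hmI).mono_left (nhdsWithin_mono _ hSsub)
    have hmS : m ∈ S := by
      refine ⟨⟨hum, hmv⟩, ?_⟩
      have hbd : ∀ t ∈ S, H v - ε * (2 * β * (Φ v - Φ m) + 2 * (v - m)) ≤ H t := by
        intro t ht
        have hmt : m ≤ t := csInf_le hSbdd ht
        have hΦmt : Φ m ≤ Φ t := hΦmono hmI (hSsub ht) hmt
        have h2' := ht.2
        nlinarith [mul_nonneg (mul_nonneg hε.le hβ0.le) (sub_nonneg.mpr hΦmt),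
          mul_nonneg hε.le (sub_nonneg.mpr hmt)]
      have := ge_of_tendsto hcont (Filter.eventually_of_mem self_mem_nhdsWithin hbd)
      linarith
    rcases eq_or_lt_of_le hum with heq | hlt
    · have := hmS.2
      rw [← heq] at this
      exact this
    · exfalso
      obtain ⟨δ₁, hδ₁, hP₁⟩ := lemP hα hαβ h1 hmI hε
      obtain ⟨δ₂, hδ₂, hP₂⟩ := lemP hα hαβ h2 hmI hε
      set θ := min (min (min δ₁ δ₂ / 2) (m - u)) ((m - a) / 2) with hθdef
      have hθ : 0 < θ := by
        apply lt_min
        apply lt_min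
        · positivity
        · linarith
        · linarith [hmI.1]
      have hθu : θ ≤ m - u := le_trans (min_le_left _ _) (min_le_right _ _)
      have hθδ : θ ≤ min δ₁ δ₂ / 2 := le_trans (min_le_left _ _) (min_le_left _ _)
      have hθa : θ ≤ (m - a) / 2 := min_le_right _ _
      set Ψ : ℝ → ℝ := fun s => Φ m - Φ (m - s) with hΨdef
      have hΨnn : ∀ s, 0 < s → s ≤ θ → 0 ≤ Ψ s := by
        intro s hs hsθ
        have hms : m - s ∈ Set.Ioo a b := by
          constructor
          · have : s ≤ (m - a) / 2 := le_trans hsθ hθa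
            linarith [hmI.1]
          · linarith [hmI.2]
        have := hΦmono hms hmI (by linarith)
        simp only [hΨdef]; linarith
      obtain ⟨k, hk, hkθ, hkey⟩ := lemA β θ Ψ hβ1 hθ hΨnn
      have hkθ' : k ≤ θ := by nlinarith
      set y := m - k with hydef
      have hyu : u ≤ y := by simp only [hydef]; linarith
      have hyI : y ∈ Set.Ioo a b := ⟨lt_of_lt_of_le hu.1 hyu, by simp only [hydef]; linarith [hmI.2]⟩
      have harg : m + β * (y - m) = m - β * k := by simp only [hydef]; ring
      have hzI : m - β * k ∈ Set.Ioo a b := by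
        constructor
        · have : β * k ≤ (m - a) / 2 := le_trans hkθ hθa
          linarith [hmI.1]
        · have : 0 < β * k := mul_pos hβ0 hk
          linarith [hmI.2]
      have hyne : y ≠ m := by simp only [hydef]; intro hcc; linarith [hk, sub_eq_self.mp hcc]
      have hyd : |y - m| = k := by
        simp only [hydef]
        rw [show m - k - m = -k by ring, abs_neg, abs_of_pos hk]
      have hδmin : θ < min δ₁ δ₂ := by
        have : 0 < min δ₁ δ₂ := lt_min hδ₁ hδ₂
        linarith
      have hyd₁ : |y - m| < δ₁ := by
        rw [hyd]
        calc k ≤ θ := hkθ'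
          _ < min δ₁ δ₂ := hδmin
          _ ≤ δ₁ := min_le_left _ _
      have hyd₂ : |y - m| < δ₂ := by
        rw [hyd]
        calc k ≤ θ := hkθ'
          _ < min δ₁ δ₂ := hδmin
          _ ≤ δ₂ := min_le_right _ _
      have hzI' : m + β * (y - m) ∈ Set.Ioo a b := by rw [harg]; exact hzI
      have hb₁ := hP₁ y hyI hyne hyd₁ hzI'
      have hb₂ := hP₂ y hyI hyne hyd₂ hzI'
      rw [harg] at hb₁ hb₂
      -- |φᵢ (m - βk) - φᵢ m| = φᵢ m - φᵢ (m - βk)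
      have hmlt : m - β * k < m := by nlinarith
      have habs₁ : |φ₁ (m - β * k) - φ₁ m| = φ₁ m - φ₁ (m - β * k) := by
        have := h1.1.monotoneOn hzI hmI hmlt.le
        rw [abs_of_nonpos (by linarith)]; ring
      have habs₂ : |φ₂ (m - β * k) - φ₂ m| = φ₂ m - φ₂ (m - β * k) := by
        have := h2.1.monotoneOn hzI hmI hmlt.le
        rw [abs_of_nonpos (by linarith)]; ring
      rw [habs₁] at hb₁
      rw [habs₂] at hb₂
      have hHym : H m - H y ≤ ε * Ψ (β * k) := by
        have hdecomp : H m - H y =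
            -(F y - F m - f m * (y - m)) + (G y - G m - f m * (y - m)) := by
          simp only [hHdef]; ring
        have t1 : -(F y - F m - f m * (y - m)) ≤ ε * (φ₁ m - φ₁ (m - β * k)) :=
          le_trans (neg_le_abs _) hb₁
        have t2 : (G y - G m - f m * (y - m)) ≤ ε * (φ₂ m - φ₂ (m - β * k)) :=
          le_trans (le_abs_self _) hb₂
        simp only [hΨdef, hΦdef]
        linarith
      -- y ∈ S
      have hyv : y ≤ v := le_trans (by simp only [hydef]; linarith) hmv
      have hyS : y ∈ S := by
        refine ⟨⟨hyu, hyv⟩, ?_⟩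
        have hmS2 := hmS.2
        have hkey' : ε * Ψ (β * k) ≤ ε * (2 * β * Ψ k + k) :=
          mul_le_mul_of_nonneg_left hkey hε.le
        have hΨk : Ψ k = Φ m - Φ y := by simp only [hΨdef, hydef]
        rw [hΨk] at hkey'
        have hvy : v - y = (v - m) + k := by simp only [hydef]; ring
        have e1 : ε * (2 * β * (Φ v - Φ y) + 2 * (v - y)) -
            (ε * (2 * β * (Φ v - Φ m) + 2 * (v - m)) + ε * (2 * β * (Φ m - Φ y) + k))
            = ε * k := by rw [hvy]; ring
        have e2 : 0 ≤ ε * k := (mul_pos hε hk).le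
        show H v - H y ≤ ε * (2 * β * (Φ v - Φ y) + 2 * (v - y))
        linarith
      have := csInf_le hSbdd hyS
      have hylt : y < m := by simp only [hydef]; linarith
      rw [← hmdef] at this
      linarith
  -- conclude
  have hK : 0 ≤ 2 * β * (Φ v - Φ u) + 2 * (v - u) := by
    have := hΦmono hu hv huv.le
    nlinarith
  by_contra hcon
  push_neg at hcon
  have hc : 0 < H v - H u := by
    show 0 < (F v - G v) - (F u - G u)
    linarith
  set K := 2 * β * (Φ v - Φ u) + 2 * (v - u) with hKdef
  have := key ((H v - H u) / (2 * (K + 1))) (by positivity)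
  rw [div_mul_eq_mul_div, le_div_iff₀ (by positivity)] at this
  nlinarith


/-- Uniqueness of the indefinite `MC^α` integral up to an additive constant. -/
theorem stmt_6 (α : ℝ) (hα : 0 < α) (a b : ℝ) (F G f : ℝ → ℝ)
    (hF : IsMCIntegral α (Set.Ioo a b) F f)
    (hG : IsMCIntegral α (Set.Ioo a b) G f) :
    ∃ c : ℝ, ∀ x ∈ Set.Ioo a b, F x - G x = c := by
  obtain ⟨φ₁, h1⟩ := hF
  obtain ⟨φ₂, h2⟩ := hG
  by_cases hab : a < b
  · have hx₀ : (a + b) / 2 ∈ Set.Ioo a b := ⟨by linarith, by linarith⟩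
    set x₀ := (a + b) / 2 with hx₀def
    refine ⟨F x₀ - G x₀, ?_⟩
    intro x hx
    have main1 := lemMain hα h1 h2
    have main2 := lemMain hα h2 h1
    rcases lt_trichotomy x x₀ with h | h | h
    · have A := main1 x hx x₀ hx₀ h
      have B := main2 x hx x₀ hx₀ h
      linarith
    · rw [h]
    · have A := main1 x₀ hx₀ x hx h
      have B := main2 x₀ hx₀ x hx h
      linarith
  · exact ⟨0, fun x hx => absurd (hx.1.trans hx.2) hab⟩
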